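/- For z : ℤ: there exist x y : ℤ with x^2 + z*x*y + y^2 = -1 if and only if z = 3 or z = -3. Moreover, if z = 3 or z = -3, then for every M : ℤ, (∃ x y : ℤ, x^2 + z*x*y + y^2 = M) ↔ (∃ x y : ℤ, x^2 + z*x*y + y^2 = -M). -/
import Mathlib

private lemma descent8 (z : ℤ) (hz : 4 ≤ z) : ∀ n : ℕ, ∀ x y : ℤ, 0 < x → 0 < y →
    y ≤ x → x ≤ n → x ^ 2 - z * x * y + y ^ 2 ≠ -1 := by
  intro n
  induction n using Nat.strong_induction_on with
  | _ n ih =>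
    intro x y hx hy hyx hxn heq
    rcases eq_or_lt_of_le hyx with h | h
    · subst h
      have h1 : (1:ℤ) ≤ y * y := mul_pos hy hy
      have h2 : (z - 2) * (y * y) = 1 := by linear_combination -heq
      nlinarith
    · rcases eq_or_lt_of_le (by linarith : (1:ℤ) ≤ y) with h1 | h1
      · have hd : x ∣ 2 := ⟨z - x, by nlinarith⟩
        have h2 := Int.le_of_dvd (by norm_num) hd
        have hx2 : x = 2 := by omega
        subst hx2
        subst h1
        norm_num at heq
        omega
      · set x' := z * y - x with hx'def
        have key : x * x' = y ^ 2 + 1 := by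
          simp only [hx'def]; linear_combination -heq
        have hx'pos : 0 < x' := by nlinarith
        have hx'le : x' ≤ y := by nlinarith
        have heq' : y ^ 2 - z * y * x' + x' ^ 2 = -1 := by
          simp only [hx'def]; linear_combination heq
        have hn1 : 1 ≤ n := by omega
        exact ih (n - 1) (by omega) y x' hy hx'pos hx'le (by omega) heq'

private lemma noNeg8 (z : ℤ) (hz : 4 ≤ z) (x y : ℤ) : x ^ 2 + z * x * y + y ^ 2 ≠ -1 := by
  intro heq
  have hxy : x * y < 0 := by
    by_contra h
    push_neg at h
    nlinarith [sq_nonneg x, sq_nonneg y]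
  have hxne : x ≠ 0 := by rintro rfl; simp at hxy
  have hyne : y ≠ 0 := by rintro rfl; simp at hxy
  have ha : 0 < |x| := abs_pos.mpr hxne
  have hb : 0 < |y| := abs_pos.mpr hyne
  have hab : |x| * |y| = -(x * y) := by
    rw [← abs_mul, abs_of_neg hxy]
  have heq2 : |x| ^ 2 - z * |x| * |y| + |y| ^ 2 = -1 := by
    rw [sq_abs, sq_abs]
    nlinarith [hab]
  rcases le_total (|y|) (|x|) with h | h
  · exact descent8 z hz (|x|).toNat (|x|) (|y|) ha hb h (Int.self_le_toNat _) heq2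
  · refine descent8 z hz (|y|).toNat (|y|) (|x|) hb ha h (Int.self_le_toNat _) ?_
    linear_combination heq2

theorem stmt8 (z : ℤ) :
    ((∃ x y : ℤ, x ^ 2 + z * x * y + y ^ 2 = -1) ↔ (z = 3 ∨ z = -3)) ∧
    ((z = 3 ∨ z = -3) → ∀ M : ℤ,
      (∃ x y : ℤ, x ^ 2 + z * x * y + y ^ 2 = M) ↔
      (∃ x y : ℤ, x ^ 2 + z * x * y + y ^ 2 = -M)) := by
  have hneg1 : (z = 3 ∨ z = -3) → ∃ a b : ℤ, a ^ 2 + z * a * b + b ^ 2 = -1 := by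
    rintro (rfl | rfl)
    · exact ⟨1, -1, by norm_num⟩
    · exact ⟨1, 1, by norm_num⟩
  have flip : ∀ M : ℤ, (∃ a b : ℤ, a ^ 2 + z * a * b + b ^ 2 = -1) →
      (∃ x y : ℤ, x ^ 2 + z * x * y + y ^ 2 = M) →
      (∃ x y : ℤ, x ^ 2 + z * x * y + y ^ 2 = -M) := by
    rintro M ⟨a, b, hab⟩ ⟨x, y, h⟩
    exact ⟨x * a - y * b, x * b + y * a + z * y * b,
      by linear_combination (a ^ 2 + z * a * b + b ^ 2) * h + M * hab⟩
  constructor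
  · constructor
    · rintro ⟨x, y, h⟩
      by_contra hc
      push_neg at hc
      obtain ⟨h3, h3'⟩ := hc
      rcases le_or_gt 4 z with hz | hz
      · exact noNeg8 z hz x y h
      rcases le_or_gt z (-4) with hz' | hz'
      · exact noNeg8 (-z) (by linarith) x (-y) (by linear_combination h)
      · have hlo : -2 ≤ z := by omega
        have hhi : z ≤ 2 := by omega
        interval_cases z <;>
          nlinarith [sq_nonneg (x + y), sq_nonneg (x - y), sq_nonneg x, sq_nonneg y]
    · exact hneg1
  · intro hz M
    constructor
    · exact flip M (hneg1 hz)
    · intro h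
      have := flip (-M) (hneg1 hz) h
      simpa using this
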